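/- Let (φ'_N, H̄'_N) and (φ''_N, H̄''_N) be two solutions of the discrete weak KAM equation 𝓗_N(x, (−Δ_N)φ_N(x)) = H̄_N on Λ_N, where φ'_N, φ''_N are bounded. Then H̄'_N = H̄''_N, i.e. the effective Hamiltonian of the weak KAM equation on the lattice Λ_N is unique. -/
import Mathlib


open scoped BigOperators RealInnerProductSpace
open MeasureTheory Filter

noncomputable section

abbrev Evec (d : ℕ) := EuclideanSpace ℝ (Fin d)

def sgnz (a : ℝ) : ℤ := if 0 < a then 1 else if a < 0 then -1 else 0

def latE (d N : ℕ) (x : Fin d → ZMod N) : Evec d :=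
  (WithLp.equiv 2 (Fin d → ℝ)).symm fun i => ((x i).val : ℝ) / N

def dplus {d N : ℕ} (φ : (Fin d → ZMod N) → ℝ) (x : Fin d → ZMod N) (i : Fin d) : ℝ :=
  (N : ℝ) * (φ (x + Pi.single i 1) - φ x)

def dminus {d N : ℕ} (φ : (Fin d → ZMod N) → ℝ) (x : Fin d → ZMod N) (i : Fin d) : ℝ :=
  (N : ℝ) * (φ (x - Pi.single i 1) - φ x)

def DeltaN {d N : ℕ} (φ : (Fin d → ZMod N) → ℝ) (x : Fin d → ZMod N) : Fin d → ℝ × ℝ :=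
  fun i => (dplus φ x i, dminus φ x i)

def negDeltaN {d N : ℕ} (φ : (Fin d → ZMod N) → ℝ) (x : Fin d → ZMod N) : Fin d → ℝ × ℝ :=
  fun i => (-dplus φ x i, -dminus φ x i)

def pairL {d : ℕ} (ξ : Fin d → ℝ × ℝ) (v : Evec d) : ℝ :=
  ∑ i, ((ξ i).1 * max (v i) 0 + (ξ i).2 * max (-(v i)) 0)

def QN {d N : ℕ} (v : Evec d) (x y : Fin d → ZMod N) : ℝ :=
  (∑ i, if y = x + Pi.single i ((sgnz (v i) : ZMod N)) then (N : ℝ) * |v i| else 0)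
    - (if y = x then (N : ℝ) * ∑ i, |v i| else 0)

def HNlat {d N : ℕ} (L : Evec d → Evec d → ℝ) (x : Fin d → ZMod N)
    (ξ : Fin d → ℝ × ℝ) : ℝ :=
  ⨆ v : Evec d, (pairL ξ v - L (latE d N x) v)

lemma coord_le_norm {d : ℕ} (v : Evec d) (i : Fin d) : |v i| ≤ ‖v‖ := by
  rw [EuclideanSpace.norm_eq]
  calc |v i| = Real.sqrt (‖v i‖ ^ 2) := by rw [Real.sqrt_sq_eq_abs]; simp
  _ ≤ _ := by
      apply Real.sqrt_le_sqrt
      exact Finset.single_le_sum (f := fun j => ‖v j‖ ^ 2) (fun j _ => by positivity)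
        (Finset.mem_univ i)

lemma pairL_le_bound {d : ℕ} (ξ : Fin d → ℝ × ℝ) (v : Evec d) :
    pairL ξ v ≤ (∑ i, (|(ξ i).1| + |(ξ i).2|)) * ‖v‖ := by
  rw [pairL, Finset.sum_mul]
  apply Finset.sum_le_sum
  intro i _
  have h1 : max (v i) 0 ≤ ‖v‖ :=
    max_le ((le_abs_self _).trans (coord_le_norm v i)) (norm_nonneg v)
  have h2 : max (-(v i)) 0 ≤ ‖v‖ := by
    refine max_le (((le_abs_self _).trans ?_)) (norm_nonneg v)
    rw [abs_neg]; exact coord_le_norm v i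
  have m1 : (0:ℝ) ≤ max (v i) 0 := le_max_right _ _
  have m2 : (0:ℝ) ≤ max (-(v i)) 0 := le_max_right _ _
  rw [add_mul]
  refine add_le_add ?_ ?_
  · calc (ξ i).1 * max (v i) 0 ≤ |(ξ i).1| * max (v i) 0 :=
        mul_le_mul_of_nonneg_right (le_abs_self _) m1
    _ ≤ |(ξ i).1| * ‖v‖ := mul_le_mul_of_nonneg_left h1 (abs_nonneg _)
  · calc (ξ i).2 * max (-(v i)) 0 ≤ |(ξ i).2| * max (-(v i)) 0 :=
        mul_le_mul_of_nonneg_right (le_abs_self _) m2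
    _ ≤ |(ξ i).2| * ‖v‖ := mul_le_mul_of_nonneg_left h2 (abs_nonneg _)

lemma bdd_range {d : ℕ} (L : Evec d → Evec d → ℝ) (g : ℝ → ℝ)
    (hsl : ∀ a : ℝ, 0 ≤ a → ∀ (x v : Evec d), a * ‖v‖ + g a ≤ L x v)
    (p : Evec d) (ξ : Fin d → ℝ × ℝ) :
    BddAbove (Set.range fun v : Evec d => pairL ξ v - L p v) := by
  set C : ℝ := ∑ i, (|(ξ i).1| + |(ξ i).2|) with hC
  set a : ℝ := max C 0 with ha
  refine ⟨-g a, ?_⟩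
  rintro _ ⟨v, rfl⟩
  have hL := hsl a (le_max_right C 0) p v
  have hp : pairL ξ v ≤ a * ‖v‖ := by
    calc pairL ξ v ≤ C * ‖v‖ := pairL_le_bound ξ v
    _ ≤ a * ‖v‖ := mul_le_mul_of_nonneg_right (le_max_left C 0) (norm_nonneg v)
  simp only [Set.mem_setOf_eq]
  linarith

lemma pairL_mono {d : ℕ} {ξ ξ' : Fin d → ℝ × ℝ}
    (h : ∀ i, (ξ i).1 ≤ (ξ' i).1 ∧ (ξ i).2 ≤ (ξ' i).2) (v : Evec d) :
    pairL ξ v ≤ pairL ξ' v := by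
  apply Finset.sum_le_sum
  intro i _
  exact add_le_add (mul_le_mul_of_nonneg_right (h i).1 (le_max_right _ _))
    (mul_le_mul_of_nonneg_right (h i).2 (le_max_right _ _))

lemma HNlat_mono {d N : ℕ} (L : Evec d → Evec d → ℝ) (g : ℝ → ℝ)
    (hsl : ∀ a : ℝ, 0 ≤ a → ∀ (x v : Evec d), a * ‖v‖ + g a ≤ L x v)
    (x : Fin d → ZMod N) {ξ ξ' : Fin d → ℝ × ℝ}
    (h : ∀ i, (ξ i).1 ≤ (ξ' i).1 ∧ (ξ i).2 ≤ (ξ' i).2) :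
    HNlat L x ξ ≤ HNlat L x ξ' :=
  ciSup_mono (bdd_range L g hsl (latE d N x) ξ')
    (fun v => sub_le_sub_right (pairL_mono h v) _)

lemma key_ineq {d N : ℕ} [NeZero N] (L : Evec d → Evec d → ℝ) (g : ℝ → ℝ)
    (hsl : ∀ a : ℝ, 0 ≤ a → ∀ (x v : Evec d), a * ‖v‖ + g a ≤ L x v)
    (φ' φ'' : (Fin d → ZMod N) → ℝ) (H' H'' : ℝ)
    (h1 : ∀ x, HNlat L x (negDeltaN φ' x) = H')
    (h2 : ∀ x, HNlat L x (negDeltaN φ'' x) = H'') : H'' ≤ H' := by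
  obtain ⟨x0, hx0⟩ := Finite.exists_max (fun x : Fin d → ZMod N => φ' x - φ'' x)
  have hNn : (0:ℝ) ≤ (N : ℝ) := Nat.cast_nonneg N
  have hmono : ∀ i, (negDeltaN φ'' x0 i).1 ≤ (negDeltaN φ' x0 i).1 ∧
      (negDeltaN φ'' x0 i).2 ≤ (negDeltaN φ' x0 i).2 := by
    intro i
    constructor
    · have := hx0 (x0 + Pi.single i 1)
      simp only [negDeltaN, dplus, neg_le_neg_iff]
      exact mul_le_mul_of_nonneg_left (by linarith) hNn
    · have := hx0 (x0 - Pi.single i 1)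
      simp only [negDeltaN, dminus, neg_le_neg_iff]
      exact mul_le_mul_of_nonneg_left (by linarith) hNn
  calc H'' = HNlat L x0 (negDeltaN φ'' x0) := (h2 x0).symm
  _ ≤ HNlat L x0 (negDeltaN φ' x0) := HNlat_mono L g hsl x0 hmono
  _ = H' := h1 x0

/-- uniqueness of the effective Hamiltonian of the discrete weak KAM
equation on `Λ_N`: if `(φ', H̄')` and `(φ'', H̄'')` are two (bounded) solutions of
`𝓗_N(x, (−Δ_N)φ(x)) = H̄` on `Λ_N`, then `H̄' = H̄''`. -/
theorem stmt11 (d N : ℕ) [NeZero N] (L : Evec d → Evec d → ℝ) (g : ℝ → ℝ)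
    (hLc : Continuous (Function.uncurry L))
    (hconv : ∀ x : Evec d, ConvexOn ℝ Set.univ (L x))
    (hsl : ∀ a : ℝ, 0 ≤ a → ∀ (x v : Evec d), a * ‖v‖ + g a ≤ L x v)
    (φ' φ'' : (Fin d → ZMod N) → ℝ) (H' H'' : ℝ)
    (hb' : ∃ M, ∀ x, |φ' x| ≤ M) (hb'' : ∃ M, ∀ x, |φ'' x| ≤ M)
    (h1 : ∀ x, HNlat L x (negDeltaN φ' x) = H')
    (h2 : ∀ x, HNlat L x (negDeltaN φ'' x) = H'') :
    H' = H'' :=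
  le_antisymm (key_ineq L g hsl φ'' φ' H'' H' h2 h1) (key_ineq L g hsl φ' φ'' H' H'' h1 h2)
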